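/- Let G be an abelian group, D a G-graded-division algebra over a field F with support T and identity component D_e, and let R = M_k(D) carry the grading determined by g_1,…,g_k satisfying the fine condition. Then the stabilizer of the grading on R is isomorphic to the semidirect product (D_e^×)^{k-1} ⋊ Stab(Γ_0), where Stab(Γ_0) is the stabilizer of the division grading on D acting componentwise on (D_e^×)^{k-1}. -/

import Mathlib

set_option maxHeartbeats 1000000
set_option synthInstance.maxHeartbeats 400000

/-- The grading on `M_k(D)`: `deg (E i j ⊗ d) = g i - g j + deg d`. -/
def MatGrading {G : Type*} [AddCommGroup G] {F : Type*} [Field F]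
    {D : Type*} [Ring D] [Algebra F D]
    (k : ℕ) (g : Fin k → G) (𝒟 : G → Submodule F D) :
    G → Submodule F (Matrix (Fin k) (Fin k) D) := fun a =>
  { carrier := {M | ∀ i j : Fin k, M i j ∈ 𝒟 (-(g i) + a + g j)}
    add_mem' := fun hM hN i j => (𝒟 _).add_mem (hM i j) (hN i j)
    zero_mem' := fun i j => (𝒟 _).zero_mem
    smul_mem' := fun c M hM i j => (𝒟 _).smul_mem c (hM i j) }

open Matrix

section Aux
variable {F : Type*} [Field F]

/-- Conjugation by a unit as an algebra automorphism. -/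
def unitConjAux {A : Type*} [Ring A] [Algebra F A] (U : Aˣ) : A ≃ₐ[F] A where
  toFun x := U * x * ↑U⁻¹
  invFun x := ↑U⁻¹ * x * U
  left_inv x := by simp [mul_assoc]
  right_inv x := by simp [mul_assoc]
  map_mul' x y := by
    simp only [mul_assoc]
    rw [Units.inv_mul_cancel_left]
  map_add' x y := by rw [mul_add, add_mul]
  commutes' c := by
    rw [← Algebra.commutes c (U : A), mul_assoc, Units.mul_inv, mul_one]

variable {D : Type*} [Ring D] [Algebra F D] {k : ℕ}

/-- diagonal matrix of units, as a unit. -/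
def diagUAux (u : Fin k → Dˣ) : (Matrix (Fin k) (Fin k) D)ˣ where
  val := Matrix.diagonal fun i => ((u i : D))
  inv := Matrix.diagonal fun i => (((u i)⁻¹ : Dˣ) : D)
  val_inv := by rw [Matrix.diagonal_mul_diagonal]; simp
  inv_val := by rw [Matrix.diagonal_mul_diagonal]; simp

/-- extend a `(k-1)`-tuple of units to a `k`-tuple with first entry `1`. -/
def uOfAux (d : Fin (k - 1) → Dˣ) : Fin k → Dˣ := fun i =>
  if _ : (i : ℕ) = 0 then 1 else d ⟨(i : ℕ) - 1, by have := i.2; omega⟩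

/-- The automorphism of `M_k(D)` built from `d` and `ψ₀`. -/
def PhiAux (d : Fin (k - 1) → Dˣ) (ψ₀ : D ≃ₐ[F] D) :
    Matrix (Fin k) (Fin k) D ≃ₐ[F] Matrix (Fin k) (Fin k) D :=
  (AlgEquiv.mapMatrix ψ₀).trans (unitConjAux (diagUAux (uOfAux d)))

lemma PhiAux_apply (d : Fin (k - 1) → Dˣ) (ψ₀ : D ≃ₐ[F] D)
    (M : Matrix (Fin k) (Fin k) D) (i j : Fin k) :
    PhiAux d ψ₀ M i j = ↑(uOfAux d i) * ψ₀ (M i j) * (((uOfAux (D := D) d j)⁻¹ : Dˣ) : D) := by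
  show ((Matrix.diagonal fun i => ((uOfAux d i : D))) * (ψ₀.mapMatrix M) *
      (Matrix.diagonal fun i => (((uOfAux (D := D) d i)⁻¹ : Dˣ) : D))) i j = _
  rw [Matrix.mul_diagonal, Matrix.diagonal_mul]
  rfl

lemma PhiAux_std (d : Fin (k - 1) → Dˣ) (ψ₀ : D ≃ₐ[F] D) (i j : Fin k) (x : D) :
    PhiAux d ψ₀ (Matrix.single i j x) =
      Matrix.single i j (↑(uOfAux d i) * ψ₀ x * (((uOfAux (D := D) d j)⁻¹ : Dˣ) : D)) := by
  ext p q
  rw [PhiAux_apply]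
  by_cases hp : i = p ∧ j = q
  · obtain ⟨rfl, rfl⟩ := hp
    rw [Matrix.single_apply_same, Matrix.single_apply_same]
  · rw [Matrix.single_apply_of_ne _ _ _ _ _ hp, Matrix.single_apply_of_ne _ _ _ _ _ hp,
      map_zero, mul_zero, zero_mul]

lemma sandwichAux (i j : Fin k) (N : Matrix (Fin k) (Fin k) D) :
    Matrix.single i i (1 : D) * N * Matrix.single j j 1 = Matrix.single i j (N i j) := by
  ext p q
  by_cases hq : q = j
  · subst hq
    rw [Matrix.mul_single_apply_same]
    by_cases hp : p = i
    · subst hp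
      rw [Matrix.single_mul_apply_same, Matrix.single_apply_same, one_mul, mul_one]
    · rw [Matrix.single_mul_apply_of_ne _ _ _ _ _ hp, zero_mul,
        Matrix.single_apply_of_ne]
      intro h; exact hp h.1.symm
  · rw [Matrix.mul_single_apply_of_ne _ _ _ _ _ hq, Matrix.single_apply_of_ne]
    intro h; exact hq h.2.symm

end Aux

lemma invMemAux {G : Type*} [AddCommGroup G] [DecidableEq G] {F : Type*} [Field F]
    {D : Type*} [Ring D] [Algebra F D] (𝒟 : G → Submodule F D)
    (hone : (1 : D) ∈ 𝒟 0)
    (hmul : ∀ a b : G, ∀ x ∈ 𝒟 a, ∀ y ∈ 𝒟 b, x * y ∈ 𝒟 (a + b))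
    (hindep : iSupIndep 𝒟) (htop : (⨆ a, 𝒟 a) = ⊤)
    (w : Dˣ) (hw : (w : D) ∈ 𝒟 0) : ((w⁻¹ : Dˣ) : D) ∈ 𝒟 0 := by
  have hint : DirectSum.IsInternal 𝒟 :=
    DirectSum.isInternal_submodule_of_iSupIndep_of_iSup_eq_top hindep htop
  obtain ⟨y, hy⟩ := hint.surjective ((w⁻¹ : Dˣ) : D)
  let f : ∀ b, 𝒟 b → 𝒟 b := fun b x =>
    ⟨(w : D) * (x : D), by simpa using hmul 0 b _ hw _ x.2⟩
  have hf : ∀ b, f b 0 = 0 := fun b => Subtype.ext (mul_zero _)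
  have key : ∀ z : DirectSum G fun b => 𝒟 b,
      DirectSum.coeAddMonoidHom 𝒟 (DFinsupp.mapRange f hf z) =
        (w : D) * DirectSum.coeAddMonoidHom 𝒟 z := by
    intro z
    induction z using DirectSum.induction_on with
    | zero =>
        rw [DFinsupp.mapRange_zero, (DirectSum.coeAddMonoidHom 𝒟).map_zero, mul_zero]
    | of b x =>
        have h1 : DFinsupp.mapRange f hf (DirectSum.of (fun b => 𝒟 b) b x)
            = DirectSum.of (fun b => 𝒟 b) b (f b x) := DFinsupp.mapRange_single
        rw [h1, DirectSum.coeAddMonoidHom_of, DirectSum.coeAddMonoidHom_of]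
    | add z₁ z₂ h1 h2 =>
        rw [DFinsupp.mapRange_add f hf (fun b x y => Subtype.ext (mul_add _ _ _)),
          (DirectSum.coeAddMonoidHom 𝒟).map_add, (DirectSum.coeAddMonoidHom 𝒟).map_add,
          h1, h2, mul_add]
  have h1 : DirectSum.coeAddMonoidHom 𝒟 (DFinsupp.mapRange f hf y) = 1 := by
    rw [key, hy, Units.mul_inv]
  have h2 : DirectSum.coeAddMonoidHom 𝒟 (DirectSum.of (fun b => 𝒟 b) 0 ⟨1, hone⟩) = 1 :=
    DirectSum.coeAddMonoidHom_of _ _ _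
  have hz : DFinsupp.mapRange f hf y = DirectSum.of (fun b => 𝒟 b) 0 ⟨1, hone⟩ :=
    hint.injective (h1.trans h2.symm)
  have hyb : ∀ b : G, b ≠ 0 → y b = 0 := by
    intro b hb
    have h3 : (DFinsupp.mapRange f hf y) b = 0 := by
      rw [hz]; exact DirectSum.of_eq_of_ne _ _ _ hb
    have h4 : (w : D) * ((y b : D)) = 0 := congrArg Subtype.val h3
    have h5 := (Units.mul_right_eq_zero w).mp h4
    exact Subtype.ext h5
  have hyform : y = DirectSum.of (fun b => 𝒟 b) 0 (y 0) := by
    apply DFinsupp.ext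
    intro b
    by_cases hb : b = 0
    · subst hb; rw [DirectSum.of_eq_same]
    · rw [hyb b hb, DirectSum.of_eq_of_ne _ _ _ hb]
  rw [hyform, DirectSum.coeAddMonoidHom_of] at hy
  rw [← hy]
  exact (y 0).2

/-- Let `D` be a `G`-graded-division algebra over `F` (`G` abelian) with identity
component `D_e`, and let `R = M_k(D)` carry the grading determined by degrees
`g 1, …, g k` satisfying the fine condition.  Then the stabilizer of the grading of
`R` is isomorphic to the semidirect product `(D_e^×)^{k-1} ⋊ Stab(Γ₀)`, the
stabilizer `Stab(Γ₀)` of the division grading acting componentwise: there is a map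
`Φ` from pairs (a `(k-1)`-tuple of units of `D_e`, an automorphism in `Stab(Γ₀)`)
to automorphisms of `R`, injective, with image exactly `Stab(Γ)`, satisfying the
semidirect-product multiplication law. -/
theorem stabilizer_of_matrix_grading
    {G : Type*} [AddCommGroup G] {F : Type*} [Field F]
    {D : Type*} [Ring D] [Algebra F D]
    (k : ℕ) (hk : 0 < k) (g : Fin k → G) (𝒟 : G → Submodule F D)
    (hone : (1 : D) ∈ 𝒟 0)
    (hmul : ∀ a b : G, ∀ x ∈ 𝒟 a, ∀ y ∈ 𝒟 b, x * y ∈ 𝒟 (a + b))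
    (hindep : iSupIndep 𝒟) (htop : (⨆ a, 𝒟 a) = ⊤)
    (hdiv : ∀ a : G, ∀ d ∈ 𝒟 a, d ≠ 0 → IsUnit d)
    (hfine : ∀ i j h l : Fin k, i ≠ j → (i, j) ≠ (h, l) →
      𝒟 (g i - g j - (g h - g l)) = ⊥) :
    ∃ Φ : (Fin (k - 1) → Dˣ) → (D ≃ₐ[F] D) →
        (Matrix (Fin k) (Fin k) D ≃ₐ[F] Matrix (Fin k) (Fin k) D),
      -- `Φ` lands in the stabilizer of the grading of `R`
      (∀ (d : Fin (k - 1) → Dˣ) (ψ₀ : D ≃ₐ[F] D),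
        (∀ i, ((d i : Dˣ) : D) ∈ 𝒟 0) → (∀ a : G, ∀ x ∈ 𝒟 a, ψ₀ x ∈ 𝒟 a) →
        ∀ a : G, ∀ M ∈ MatGrading k g 𝒟 a, (Φ d ψ₀) M ∈ MatGrading k g 𝒟 a) ∧
      -- `Φ` is injective on its domain
      (∀ (d d' : Fin (k - 1) → Dˣ) (ψ₀ ψ₀' : D ≃ₐ[F] D),
        (∀ i, ((d i : Dˣ) : D) ∈ 𝒟 0) → (∀ a : G, ∀ x ∈ 𝒟 a, ψ₀ x ∈ 𝒟 a) →
        (∀ i, ((d' i : Dˣ) : D) ∈ 𝒟 0) → (∀ a : G, ∀ x ∈ 𝒟 a, ψ₀' x ∈ 𝒟 a) →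
        Φ d ψ₀ = Φ d' ψ₀' → d = d' ∧ ψ₀ = ψ₀') ∧
      -- `Φ` is onto the stabilizer of the grading of `R`
      (∀ Ψ : Matrix (Fin k) (Fin k) D ≃ₐ[F] Matrix (Fin k) (Fin k) D,
        (∀ a : G, ∀ M ∈ MatGrading k g 𝒟 a, Ψ M ∈ MatGrading k g 𝒟 a) →
        ∃ (d : Fin (k - 1) → Dˣ) (ψ₀ : D ≃ₐ[F] D),
          (∀ i, ((d i : Dˣ) : D) ∈ 𝒟 0) ∧ (∀ a : G, ∀ x ∈ 𝒟 a, ψ₀ x ∈ 𝒟 a) ∧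
          Φ d ψ₀ = Ψ) ∧
      -- the semidirect-product multiplication law, with `Stab(Γ₀)` acting
      -- componentwise on `(D_e^×)^{k-1}`
      (∀ (d d' d'' : Fin (k - 1) → Dˣ) (ψ₀ ψ₀' : D ≃ₐ[F] D),
        (∀ i, ((d i : Dˣ) : D) ∈ 𝒟 0) → (∀ a : G, ∀ x ∈ 𝒟 a, ψ₀ x ∈ 𝒟 a) →
        (∀ i, ((d' i : Dˣ) : D) ∈ 𝒟 0) → (∀ a : G, ∀ x ∈ 𝒟 a, ψ₀' x ∈ 𝒟 a) →
        (∀ i, ((d'' i : Dˣ) : D) = ((d i : Dˣ) : D) * ψ₀ ((d' i : Dˣ) : D)) →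
        Φ d ψ₀ * Φ d' ψ₀' = Φ d'' (ψ₀ * ψ₀')) := by
  classical
  have entry : ∀ {A B : Matrix (Fin k) (Fin k) D}, A = B → ∀ p q, A p q = B p q :=
    fun h p q => by rw [h]
  refine ⟨@PhiAux F _ D _ _ k, ?_, ?_, ?_, ?_⟩
  · -- stabilizer
    intro d ψ₀ hd hψ a M hM
    intro i j
    rw [PhiAux_apply]
    have hu : ∀ p : Fin k, ((uOfAux d p : Dˣ) : D) ∈ 𝒟 0 := by
      intro p
      unfold uOfAux
      split
      · simpa using hone
      · exact hd _
    have huinv : ∀ p : Fin k, (((uOfAux (D := D) d p)⁻¹ : Dˣ) : D) ∈ 𝒟 0 :=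
      fun p => invMemAux 𝒟 hone hmul hindep htop _ (hu p)
    have h1 : ψ₀ (M i j) ∈ 𝒟 (-(g i) + a + g j) := hψ _ _ (hM i j)
    have h2 := hmul _ _ _ (hmul _ _ _ (hu i) _ h1) _ (huinv j)
    have he : (0 : G) + (-(g i) + a + g j) + 0 = -(g i) + a + g j := by abel
    rwa [he] at h2
  · -- injectivity
    intro d d' ψ₀ ψ₀' _ _ _ _ h
    have i0 : Fin k := ⟨0, hk⟩
    have hu0 : ∀ dd : Fin (k - 1) → Dˣ, uOfAux (D := D) dd ⟨0, hk⟩ = 1 := by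
      intro dd; unfold uOfAux; rw [dif_pos rfl]
    have hu1 : ∀ (dd : Fin (k - 1) → Dˣ) (i : Fin (k - 1)),
        uOfAux (D := D) dd ⟨(i : ℕ) + 1, by have := i.2; omega⟩ = dd i := by
      intro dd i
      unfold uOfAux
      rw [dif_neg (Nat.succ_ne_zero _)]
      refine congrArg dd (Fin.ext ?_)
      simp
    have hψeq : ψ₀ = ψ₀' := by
      apply AlgEquiv.ext
      intro x
      have h1 : PhiAux d ψ₀ (Matrix.single ⟨0, hk⟩ ⟨0, hk⟩ x) =
          PhiAux d' ψ₀' (Matrix.single ⟨0, hk⟩ ⟨0, hk⟩ x) :=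
        DFunLike.congr_fun h _
      rw [PhiAux_std, PhiAux_std] at h1
      have h2 := entry h1 ⟨0, hk⟩ ⟨0, hk⟩
      rw [Matrix.single_apply_same, Matrix.single_apply_same, hu0 d, hu0 d'] at h2
      simpa using h2
    refine ⟨funext fun i => ?_, hψeq⟩
    have h1 : PhiAux d ψ₀ (Matrix.single ⟨0, hk⟩ ⟨(i : ℕ) + 1, by have := i.2; omega⟩ (1 : D)) =
        PhiAux d' ψ₀' (Matrix.single ⟨0, hk⟩ ⟨(i : ℕ) + 1, by have := i.2; omega⟩ (1 : D)) :=
      DFunLike.congr_fun h _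
    rw [PhiAux_std, PhiAux_std] at h1
    have h2 := entry h1 ⟨0, hk⟩ ⟨(i : ℕ) + 1, by have := i.2; omega⟩
    rw [Matrix.single_apply_same, Matrix.single_apply_same, hu0 d, hu0 d', hu1 d, hu1 d'] at h2
    have h3 : ((d i)⁻¹ : Dˣ) = (d' i)⁻¹ := Units.ext (by simpa using h2)
    exact inv_injective h3
  · -- surjectivity onto the stabilizer
    intro Ψ hΨ
    by_cases hDs : Subsingleton D
    · refine ⟨fun _ => 1, AlgEquiv.refl, fun i => by simpa using hone,
        fun a x hx => by simpa using hx, ?_⟩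
      apply AlgEquiv.ext
      intro M
      apply Subsingleton.elim (α := Matrix (Fin k) (Fin k) D)
    rw [not_subsingleton_iff_nontrivial] at hDs
    -- membership of standard basis matrices in the grading
    have hstdmem : ∀ (p q : Fin k) (b : G) (x : D), x ∈ 𝒟 b →
        Matrix.single p q x ∈ MatGrading k g 𝒟 (g p - g q + b) := by
      intro p q b x hx i j
      by_cases hij : p = i ∧ q = j
      · obtain ⟨rfl, rfl⟩ := hij
        rw [Matrix.single_apply_same]
        have he : -(g p) + (g p - g q + b) + g q = b := by abel
        rw [he]; exact hx
      · rw [Matrix.single_apply_of_ne _ _ _ _ _ hij]; exact (𝒟 _).zero_mem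
    -- Ψ fixes the diagonal idempotents
    have hPmem : ∀ h : Fin k, Ψ (Matrix.single h h (1 : D)) ∈ MatGrading k g 𝒟 0 := by
      intro h
      have h1 := hstdmem h h 0 1 hone
      have he : g h - g h + (0 : G) = 0 := by abel
      rw [he] at h1
      exact hΨ 0 _ h1
    have hPoff : ∀ h i j : Fin k, i ≠ j → Ψ (Matrix.single h h (1 : D)) i j = 0 := by
      intro h i j hij
      have hmem := hPmem h i j
      have h2 : ((j, i) : Fin k × Fin k) ≠ (h, h) := by
        intro hc
        rw [Prod.mk.injEq] at hc
        exact hij (hc.2.trans hc.1.symm)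
      have h3 := hfine j i h h (Ne.symm hij) h2
      have he : -(g i) + 0 + g j = g j - g i - (g h - g h) := by abel
      rw [he, h3] at hmem
      exact (Submodule.mem_bot F).mp hmem
    have hdiagone : ∀ h : Fin k, Ψ (Matrix.single h h (1 : D)) h h = 1 := by
      intro h
      by_cases hk1 : k = 1
      · subst hk1
        have hone' : Matrix.single h h (1 : D) = 1 := by
          ext p q
          rw [Subsingleton.elim p h, Subsingleton.elim q h, Matrix.single_apply_same,
            Matrix.one_apply_eq]
        rw [hone', _root_.map_one, ← hone', Matrix.single_apply_same]
      · obtain ⟨i, hih⟩ : ∃ i : Fin k, i ≠ h := by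
          by_cases h0 : (h : ℕ) = 0
          · refine ⟨⟨1, by omega⟩, fun hc => ?_⟩
            have h1 : (1 : ℕ) = (h : ℕ) := congrArg Fin.val hc
            omega
          · exact ⟨⟨0, hk⟩, fun hc => h0 (by rw [← hc])⟩
        have hXmem : Matrix.single h i (1 : D) ∈ MatGrading k g 𝒟 (g h - g i) := by
          have h1 := hstdmem h i 0 1 hone
          rwa [add_zero] at h1
        have hΨX := hΨ _ _ hXmem
        have hXoff : ∀ p q : Fin k, ¬(h = p ∧ i = q) →
            Ψ (Matrix.single h i (1 : D)) p q = 0 := by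
          intro p q hpq
          have hb : ((h, i) : Fin k × Fin k) ≠ (p, q) := by
            intro hc
            rw [Prod.mk.injEq] at hc
            exact hpq hc
          have h3 := hfine h i p q (Ne.symm hih) hb
          have he : -(g p) + (g h - g i) + g q = g h - g i - (g p - g q) := by abel
          have hmem := hΨX p q
          rw [he, h3] at hmem
          exact (Submodule.mem_bot F).mp hmem
        have hXform : Ψ (Matrix.single h i (1 : D)) =
            Matrix.single h i (Ψ (Matrix.single h i (1 : D)) h i) := by
          ext p q
          by_cases hpq : h = p ∧ i = q
          · obtain ⟨rfl, rfl⟩ := hpq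
            rw [Matrix.single_apply_same]
          · rw [hXoff p q hpq, Matrix.single_apply_of_ne _ _ _ _ _ hpq]
        have hyne : Ψ (Matrix.single h i (1 : D)) h i ≠ 0 := by
          intro h0
          have hz : Ψ (Matrix.single h i (1 : D)) = 0 := by
            rw [hXform, h0, single_zero]
          have hX0 : Matrix.single h i (1 : D) = (0 : Matrix (Fin k) (Fin k) D) :=
            Ψ.injective (by rw [hz, map_zero])
          have h1 := entry hX0 h i
          rw [Matrix.single_apply_same] at h1
          exact one_ne_zero h1
        have hymem : Ψ (Matrix.single h i (1 : D)) h i ∈ 𝒟 0 := by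
          have h1 := hΨX h i
          have he : -(g h) + (g h - g i) + g i = 0 := by abel
          rwa [he] at h1
        have hyu : IsUnit (Ψ (Matrix.single h i (1 : D)) h i) := hdiv 0 _ hymem hyne
        have hEX : Matrix.single h h (1 : D) * Matrix.single h i 1 = Matrix.single h i 1 := by
          rw [Matrix.single_mul_single_same, one_mul]
        have h5 : Ψ (Matrix.single h h (1 : D)) * Ψ (Matrix.single h i (1 : D)) =
            Ψ (Matrix.single h i (1 : D)) := by rw [← _root_.map_mul, hEX]
        nth_rewrite 1 [hXform] at h5
        nth_rewrite 2 [hXform] at h5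
        have h6 := entry h5 h i
        rw [Matrix.mul_single_apply_same, Matrix.single_apply_same] at h6
        exact hyu.mul_right_cancel (h6.trans (one_mul _).symm)
    have hdiagoff : ∀ h h' : Fin k, h ≠ h' → Ψ (Matrix.single h h (1 : D)) h' h' = 0 := by
      intro h h' hne
      have hprod : Matrix.single h h (1 : D) * Matrix.single h' h' 1 = 0 :=
        Matrix.single_mul_single_of_ne _ _ _ _ hne _
      have h5 : Ψ (Matrix.single h h (1 : D)) * Ψ (Matrix.single h' h' (1 : D)) = 0 := by
        rw [← _root_.map_mul, hprod, map_zero]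
      have h6 := entry h5 h' h'
      rw [Matrix.mul_apply] at h6
      have h7 : ∑ l, Ψ (Matrix.single h h (1 : D)) h' l * Ψ (Matrix.single h' h' (1 : D)) l h'
          = Ψ (Matrix.single h h (1 : D)) h' h' * Ψ (Matrix.single h' h' (1 : D)) h' h' := by
        apply Finset.sum_eq_single
        · intro l _ hl
          rw [hPoff h h' l (Ne.symm hl), zero_mul]
        · intro hh
          exact absurd (Finset.mem_univ _) hh
      rw [h7, hdiagone h', mul_one] at h6
      simpa using h6
    have hE : ∀ h : Fin k, Ψ (Matrix.single h h (1 : D)) = Matrix.single h h 1 := by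
      intro h
      ext p q
      by_cases hpq : p = q
      · subst hpq
        by_cases hph : p = h
        · subst hph
          rw [hdiagone p, Matrix.single_apply_same]
        · rw [hdiagoff h p (Ne.symm hph), Matrix.single_apply_of_ne]
          intro hc; exact hph hc.1.symm
      · rw [hPoff h p q hpq, Matrix.single_apply_of_ne]
        intro hc; exact hpq (hc.1.symm.trans hc.2)
    -- the sandwich property, for any automorphism fixing the diagonal idempotents
    have hsand : ∀ (Θ : Matrix (Fin k) (Fin k) D ≃ₐ[F] Matrix (Fin k) (Fin k) D),
        (∀ h, Θ (Matrix.single h h (1 : D)) = Matrix.single h h 1) →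
        ∀ (i j : Fin k) (x : D),
          Θ (Matrix.single i j x) = Matrix.single i j (Θ (Matrix.single i j x) i j) := by
      intro Θ hΘ i j x
      have h1 : Matrix.single i i (1 : D) * Matrix.single i j x * Matrix.single j j 1
          = Matrix.single i j x := by
        rw [sandwichAux, Matrix.single_apply_same]
      nth_rewrite 1 [← h1]
      rw [_root_.map_mul, _root_.map_mul, hΘ i, hΘ j, sandwichAux]
    have hφ := hsand Ψ hE
    have hEinv : ∀ h : Fin k, Ψ.symm (Matrix.single h h (1 : D)) = Matrix.single h h 1 := by
      intro h
      conv_lhs => rw [← hE h]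
      rw [AlgEquiv.symm_apply_apply]
    have hφinv := hsand Ψ.symm hEinv
    -- multiplicativity of the entry maps
    have hmulφ : ∀ (i j l : Fin k) (x y : D),
        Ψ (Matrix.single i j x) i j * Ψ (Matrix.single j l y) j l
          = Ψ (Matrix.single i l (x * y)) i l := by
      intro i j l x y
      have h1 : Ψ (Matrix.single i j x) * Ψ (Matrix.single j l y) =
          Ψ (Matrix.single i l (x * y)) := by
        rw [← _root_.map_mul, Matrix.single_mul_single_same]
      nth_rewrite 1 [hφ i j x] at h1
      nth_rewrite 1 [hφ j l y] at h1
      rw [Matrix.single_mul_single_same] at h1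
      have h2 := entry h1 i l
      rwa [Matrix.single_apply_same] at h2
    have hφ11 : ∀ i : Fin k, Ψ (Matrix.single i i (1 : D)) i i = 1 := by
      intro i
      rw [hE i, Matrix.single_apply_same]
    have hmk : ∀ p : Fin k,
        Ψ (Matrix.single p ⟨0, hk⟩ (1 : D)) p ⟨0, hk⟩ *
          Ψ (Matrix.single ⟨0, hk⟩ p (1 : D)) ⟨0, hk⟩ p = 1 := by
      intro p
      rw [hmulφ, one_mul, hφ11]
    have hmk' : ∀ p : Fin k,
        Ψ (Matrix.single ⟨0, hk⟩ p (1 : D)) ⟨0, hk⟩ p *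
          Ψ (Matrix.single p ⟨0, hk⟩ (1 : D)) p ⟨0, hk⟩ = 1 := by
      intro p
      rw [hmulφ, one_mul, hφ11]
    -- the tuple of units and the automorphism of D
    let u : Fin k → Dˣ := fun p =>
      ⟨Ψ (Matrix.single p ⟨0, hk⟩ (1 : D)) p ⟨0, hk⟩,
       Ψ (Matrix.single ⟨0, hk⟩ p (1 : D)) ⟨0, hk⟩ p, hmk p, hmk' p⟩
    have hli : ∀ x : D,
        Ψ.symm (Matrix.single ⟨0, hk⟩ ⟨0, hk⟩
          (Ψ (Matrix.single ⟨0, hk⟩ ⟨0, hk⟩ x) ⟨0, hk⟩ ⟨0, hk⟩)) ⟨0, hk⟩ ⟨0, hk⟩ = x := by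
      intro x
      rw [← hφ ⟨0, hk⟩ ⟨0, hk⟩ x, AlgEquiv.symm_apply_apply, Matrix.single_apply_same]
    have hri : ∀ x : D,
        Ψ (Matrix.single ⟨0, hk⟩ ⟨0, hk⟩
          (Ψ.symm (Matrix.single ⟨0, hk⟩ ⟨0, hk⟩ x) ⟨0, hk⟩ ⟨0, hk⟩)) ⟨0, hk⟩ ⟨0, hk⟩ = x := by
      intro x
      rw [← hφinv ⟨0, hk⟩ ⟨0, hk⟩ x, AlgEquiv.apply_symm_apply, Matrix.single_apply_same]
    let ψ₀ : D ≃ₐ[F] D :=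
      { toFun := fun x => Ψ (Matrix.single ⟨0, hk⟩ ⟨0, hk⟩ x) ⟨0, hk⟩ ⟨0, hk⟩
        invFun := fun x => Ψ.symm (Matrix.single ⟨0, hk⟩ ⟨0, hk⟩ x) ⟨0, hk⟩ ⟨0, hk⟩
        left_inv := hli
        right_inv := hri
        map_mul' := fun x y => (hmulφ ⟨0, hk⟩ ⟨0, hk⟩ ⟨0, hk⟩ x y).symm
        map_add' := fun x y => by
          rw [single_add, _root_.map_add]
          rfl
        commutes' := fun c => by
          rw [Algebra.algebraMap_eq_smul_one, ← smul_single, _root_.map_smul,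
            Matrix.smul_apply, hφ11] }
    let d : Fin (k - 1) → Dˣ := fun i => u ⟨(i : ℕ) + 1, by have := i.2; omega⟩
    have hud : ∀ p : Fin k, uOfAux (D := D) d p = u p := by
      intro p
      by_cases hp : (p : ℕ) = 0
      · have hpe : p = ⟨0, hk⟩ := Fin.ext hp
        subst hpe
        unfold uOfAux
        rw [dif_pos rfl]
        refine (Units.ext ?_).symm
        show Ψ (Matrix.single ⟨0, hk⟩ ⟨0, hk⟩ (1 : D)) ⟨0, hk⟩ ⟨0, hk⟩ = ((1 : Dˣ) : D)
        rw [hφ11]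
        rfl
      · unfold uOfAux
        rw [dif_neg hp]
        show u ⟨(p : ℕ) - 1 + 1, _⟩ = u p
        refine congrArg u (Fin.ext ?_)
        show (p : ℕ) - 1 + 1 = (p : ℕ)
        omega
    have humem : ∀ p : Fin k, ((u p : Dˣ) : D) ∈ 𝒟 0 := by
      intro p
      show Ψ (Matrix.single p ⟨0, hk⟩ (1 : D)) p ⟨0, hk⟩ ∈ 𝒟 0
      have h1 : Matrix.single p ⟨0, hk⟩ (1 : D) ∈ MatGrading k g 𝒟 (g p - g ⟨0, hk⟩) := by
        have h2 := hstdmem p ⟨0, hk⟩ 0 1 hone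
        rwa [add_zero] at h2
      have h2 := hΨ _ _ h1 p ⟨0, hk⟩
      have he : -(g p) + (g p - g ⟨0, hk⟩) + g ⟨0, hk⟩ = 0 := by abel
      rwa [he] at h2
    refine ⟨d, ψ₀, fun i => humem _, ?_, ?_⟩
    · intro a x hx
      show Ψ (Matrix.single ⟨0, hk⟩ ⟨0, hk⟩ x) ⟨0, hk⟩ ⟨0, hk⟩ ∈ 𝒟 a
      have h1 : Matrix.single ⟨0, hk⟩ ⟨0, hk⟩ x ∈ MatGrading k g 𝒟 a := by
        have h2 := hstdmem ⟨0, hk⟩ ⟨0, hk⟩ a x hx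
        have he : g ⟨0, hk⟩ - g ⟨0, hk⟩ + a = a := by abel
        rwa [he] at h2
      have h2 := hΨ a _ h1 ⟨0, hk⟩ ⟨0, hk⟩
      have he : -(g ⟨0, hk⟩) + a + g ⟨0, hk⟩ = a := by abel
      rwa [he] at h2
    · apply AlgEquiv.ext
      intro M
      have hM := matrix_eq_sum_single M
      nth_rewrite 1 [hM]
      nth_rewrite 2 [hM]
      rw [map_sum, map_sum]
      refine Finset.sum_congr rfl fun i _ => ?_
      rw [map_sum, map_sum]
      refine Finset.sum_congr rfl fun j _ => ?_
      rw [PhiAux_std, hφ i j (M i j), hud i, hud j]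
      refine congrArg (Matrix.single i j) ?_
      show Ψ (Matrix.single i ⟨0, hk⟩ (1 : D)) i ⟨0, hk⟩ *
          Ψ (Matrix.single ⟨0, hk⟩ ⟨0, hk⟩ (M i j)) ⟨0, hk⟩ ⟨0, hk⟩ *
          Ψ (Matrix.single ⟨0, hk⟩ j (1 : D)) ⟨0, hk⟩ j = Ψ (Matrix.single i j (M i j)) i j
      rw [hmulφ, one_mul, hmulφ, mul_one]
  · -- multiplication law
    intro d d' d'' ψ₀ ψ₀' hd hψ hd' hψ' hdd
    have hu'' : ∀ p : Fin k, ((uOfAux d'' p : Dˣ) : D) =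
        ↑(uOfAux d p) * ψ₀ ↑(uOfAux d' p) := by
      intro p
      unfold uOfAux
      split
      · simp
      · exact hdd _
    have huinv : ∀ p : Fin k, (((uOfAux (D := D) d'' p)⁻¹ : Dˣ) : D) =
        ψ₀ (((uOfAux (D := D) d' p)⁻¹ : Dˣ) : D) * (((uOfAux (D := D) d p)⁻¹ : Dˣ) : D) := by
      intro p
      have h1 : ((uOfAux d'' p : Dˣ) : D) *
          (ψ₀ (((uOfAux (D := D) d' p)⁻¹ : Dˣ) : D) * (((uOfAux (D := D) d p)⁻¹ : Dˣ) : D))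
          = 1 := by
        rw [hu'' p, mul_assoc, ← mul_assoc (ψ₀ ((uOfAux d' p : Dˣ) : D)), ← _root_.map_mul ψ₀,
          Units.mul_inv, _root_.map_one, one_mul, Units.mul_inv]
      have h2 := congrArg (fun t => (((uOfAux (D := D) d'' p)⁻¹ : Dˣ) : D) * t) h1
      have h3 : ψ₀ (((uOfAux (D := D) d' p)⁻¹ : Dˣ) : D) * (((uOfAux (D := D) d p)⁻¹ : Dˣ) : D)
          = (((uOfAux (D := D) d'' p)⁻¹ : Dˣ) : D) := by simpa [← mul_assoc] using h2
      exact h3.symm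
    apply AlgEquiv.ext
    intro M
    rw [AlgEquiv.mul_apply]
    ext i j
    rw [PhiAux_apply, PhiAux_apply, PhiAux_apply, hu'' i, huinv j, AlgEquiv.mul_apply]
    simp only [_root_.map_mul, mul_assoc]
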